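/- The Hindman ideal H, regarded as a subset of the Polish space P(ω) ≅ 2^ω, is Π¹₁-complete: its complement is analytic, and for every Polish space Y and every coanalytic set B ⊆ Y there is a Borel measurable function f : Y → P(ω) with f⁻¹(H) = B. -/

import Mathlib

open MeasureTheory

/-- `FS B` is the set of all finite sums of distinct elements of `B`. -/
def FS (B : Set ℕ) : Set ℕ :=
  {n | ∃ F : Finset ℕ, ↑F ⊆ B ∧ F.Nonempty ∧ ∑ i ∈ F, i = n}

/-- `A ⊆ ω` is an IP-set if there is an infinite `B ⊆ A` with `FS B ⊆ A`. -/
def IsIP (A : Set ℕ) : Prop :=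
  ∃ B : Set ℕ, B.Infinite ∧ B ⊆ A ∧ FS B ⊆ A

/-- The Hindman ideal: all non-IP-sets, viewed inside the Cantor space `2^ω ≅ P(ω)`. -/
def hindmanIdeal : Set (ℕ → Bool) :=
  {x | ¬ IsIP {n | x n = true}}

namespace HindmanProof

open Encodable Metric Set

lemma testBit_add_block {a b M : ℕ} (ha : a < 2 ^ M) (hb : 2 ^ M ∣ b) (i : ℕ) :
    (a + b).testBit i = (a.testBit i || b.testBit i) := by
  obtain ⟨c, rfl⟩ := hb
  rw [Nat.add_comm, Nat.two_pow_add_eq_or_of_lt ha, Nat.testBit_or, Bool.or_comm]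

lemma testBit_sum_two_pow (E : Finset ℕ) (p : ℕ) :
    (∑ e ∈ E, 2 ^ e).testBit p = decide (p ∈ E) := by
  induction E using Finset.induction_on_min with
  | empty => simp [Nat.zero_testBit]
  | insert a s ha ih =>
      rw [Finset.sum_insert (fun h => absurd (ha a h) (lt_irrefl a))]
      have hdvd : (2:ℕ) ^ (a+1) ∣ ∑ e ∈ s, 2 ^ e := by
        refine Finset.dvd_sum fun e he => pow_dvd_pow 2 (ha e he)
      rw [testBit_add_block (Nat.pow_lt_pow_right one_lt_two (Nat.lt_succ_self a)) hdvd,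
        Nat.testBit_two_pow, ih]
      simp [Finset.mem_insert, eq_comm, or_comm]

lemma exists_block {B : Set ℕ} (hB : B.Infinite) (U : Finset ℕ) (M : ℕ) :
    ∃ F : Finset ℕ, ↑F ⊆ B ∧ (∀ u ∈ U, u ∉ F) ∧ 0 < ∑ i ∈ F, i ∧ 2 ^ M ∣ ∑ i ∈ F, i := by
  set B' : Set ℕ := B \ (↑U ∪ {0}) with hB'
  have hB'inf : B'.Infinite := hB.diff ((U.finite_toSet).union (finite_singleton 0))
  -- pigeonhole on residues mod 2^M
  obtain ⟨r, hr⟩ : ∃ r, (B' ∩ {x | x % 2 ^ M = r}).Infinite := by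
    by_contra h
    push_neg at h
    have : B' ⊆ ⋃ r ∈ Finset.range (2 ^ M), (B' ∩ {x | x % 2 ^ M = r}) := by
      intro x hx
      exact Set.mem_biUnion (Finset.mem_range.2 (Nat.mod_lt _ (Nat.two_pow_pos M))) ⟨hx, rfl⟩
    exact hB'inf ((Set.Finite.biUnion (Finset.range (2 ^ M)).finite_toSet
      (fun r _ => h r)).subset this)
  obtain ⟨F, hFsub, hFcard⟩ := hr.exists_subset_card_eq (2 ^ M)
  have hFB' : ↑F ⊆ B' := fun x hx => (hFsub hx).1
  refine ⟨F, fun x hx => (hFB' hx).1, ?_, ?_, ?_⟩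
  · intro u hu huF
    exact (hFB' huF).2 (Or.inl hu)
  · have hne : F.Nonempty := Finset.card_pos.1 (by rw [hFcard]; exact Nat.two_pow_pos M)
    obtain ⟨x, hx⟩ := hne
    have hx0 : 0 < x := Nat.pos_of_ne_zero (fun h => (hFB' hx).2 (Or.inr (by simp [h])))
    exact lt_of_lt_of_le hx0 (Finset.single_le_sum (fun i _ => Nat.zero_le i) hx)
  · apply Nat.dvd_of_mod_eq_zero
    rw [Finset.sum_nat_mod]
    have : ∀ x ∈ F, x % 2 ^ M = r := fun x hx => (hFsub hx).2
    rw [Finset.sum_congr rfl this, Finset.sum_const, hFcard, smul_eq_mul, Nat.mul_mod_right]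

lemma exists_block_seq {B : Set ℕ} (hB : B.Infinite) :
    ∃ (y : ℕ → ℕ) (M : ℕ → ℕ),
      StrictMono M ∧ (∀ i, y i ∈ FS B) ∧ (∀ i j, i < j → y i + y j ∈ FS B) ∧
      (∀ i, 0 < y i) ∧ (∀ i, 2 ^ M i ∣ y i) ∧ (∀ i, y i < 2 ^ M (i + 1)) := by
  choose pick h1 h2 h3 h4 using fun (U : Finset ℕ) (M : ℕ) => exists_block hB U M
  set st : ℕ → Finset ℕ × ℕ := fun i => Nat.rec (∅, 0)
    (fun _ p => (p.1 ∪ pick p.1 p.2, max (p.2 + 1) ((∑ a ∈ pick p.1 p.2, a) + 1))) i with hst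
  set F : ℕ → Finset ℕ := fun i => pick (st i).1 (st i).2 with hF
  set M : ℕ → ℕ := fun i => (st i).2 with hM
  set y : ℕ → ℕ := fun i => ∑ a ∈ F i, a with hy
  have hstep : ∀ i, st (i + 1) = ((st i).1 ∪ F i, max (M i + 1) (y i + 1)) := fun i => rfl
  have hMsucc : ∀ i, M (i + 1) = max (M i + 1) (y i + 1) := fun i => rfl
  have hMmono : StrictMono M := by
    apply strictMono_nat_of_lt_succ
    intro i
    rw [hMsucc]
    exact lt_of_lt_of_le (Nat.lt_succ_self _) (le_max_left _ _)
  have hUmono : ∀ i j, i ≤ j → (st i).1 ⊆ (st j).1 := by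
    intro i j hij
    induction j with
    | zero => simp_all
    | succ j ih =>
        rcases Nat.lt_or_ge i (j+1) with h | h
        · exact (ih (Nat.lt_succ_iff.1 h)).trans (by rw [hstep]; exact Finset.subset_union_left)
        · have : i = j + 1 := le_antisymm hij h
          subst this; rfl
  have hFU : ∀ i j, i < j → ∀ x ∈ F i, x ∈ (st j).1 := by
    intro i j hij x hx
    exact hUmono (i+1) j hij ((hstep i ▸ Finset.mem_union_right _ hx))
  have hFne : ∀ i, (F i).Nonempty := by
    intro i
    rcases Finset.eq_empty_or_nonempty (F i) with h | h
    · exfalso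
      have := h3 (st i).1 (st i).2
      rw [show pick (st i).1 (st i).2 = F i from rfl, h] at this
      simp at this
    · exact h
  have hdisj : ∀ i j, i < j → Disjoint (F i) (F j) := by
    intro i j hij
    rw [Finset.disjoint_left]
    intro x hxi hxj
    exact h2 (st j).1 (st j).2 x (hFU i j hij x hxi) hxj
  have hFB : ∀ i, ↑(F i) ⊆ B := fun i => h1 (st i).1 (st i).2
  refine ⟨y, M, hMmono, ?_, ?_, ?_, ?_, ?_⟩
  · exact fun i => ⟨F i, hFB i, hFne i, rfl⟩
  · intro i j hij
    refine ⟨F i ∪ F j, ?_, (hFne i).mono Finset.subset_union_left, ?_⟩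
    · rw [Finset.coe_union]; exact Set.union_subset (hFB i) (hFB j)
    · rw [Finset.sum_union (hdisj i j hij)]
  · exact fun i => h3 (st i).1 (st i).2
  · exact fun i => h4 (st i).1 (st i).2
  · intro i
    have h1' : y i + 1 ≤ M (i + 1) := by rw [hMsucc]; exact le_max_right _ _
    calc y i < 2 ^ (y i) := Nat.lt_two_pow_self
    _ ≤ 2 ^ (M (i+1)) := Nat.pow_le_pow_right (by norm_num) (le_trans (Nat.le_succ _) h1')

def Good0 (n : ℕ) : Prop :=
  0 < n ∧
  (∀ p, n.testBit p = true → ∃ l : List ℕ, decode₂ (List ℕ) p = some l ∧ l ≠ []) ∧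
  (∀ p q : ℕ, n.testBit p = true → n.testBit q = true →
    ∀ l m : List ℕ, decode₂ (List ℕ) p = some l → decode₂ (List ℕ) q = some m →
      l <+: m ∨ m <+: l)

def Good (T : Set (List ℕ)) (n : ℕ) : Prop :=
  Good0 n ∧ ∀ p, n.testBit p = true → ∀ l : List ℕ, decode₂ (List ℕ) p = some l → l ∈ T

lemma prefix_getD {l₁ l₂ : List ℕ} (h : l₁ <+: l₂) {n : ℕ} (hn : n < l₁.length) (d : ℕ) :
    l₂.getD n d = l₁.getD n d := by
  obtain ⟨t, rfl⟩ := h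
  exact List.getD_append _ _ _ _ hn

lemma branch_of_isIP {T : Set (List ℕ)} (h : IsIP {n | Good T n}) :
    ∃ x : ℕ → ℕ, ∀ k : ℕ, ∃ l ∈ T, k ≤ l.length ∧ ∀ n < l.length, x n = l.getD n 0 := by
  obtain ⟨B, hBinf, hBsub, hFS⟩ := h
  obtain ⟨y, M, hMmono, hyFS, hpFS, hypos, hdvd, hlt⟩ := exists_block_seq hBinf
  have hyA : ∀ i, Good T (y i) := fun i => hFS (hyFS i)
  have hpA : ∀ i j, i < j → Good T (y i + y j) := fun i j hij => hFS (hpFS i j hij)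
  have hsupp : ∀ i p, (y i).testBit p = true → M i ≤ p ∧ p < M (i + 1) := by
    intro i p hp
    constructor
    · by_contra hc
      push_neg at hc
      obtain ⟨c, hcc⟩ := hdvd i
      rw [hcc, Nat.testBit_two_pow_mul] at hp
      simp only [Bool.and_eq_true, decide_eq_true_eq] at hp
      omega
    · by_contra hc
      push_neg at hc
      have h1 := Nat.ge_two_pow_of_testBit hp
      have h2 : (2:ℕ) ^ (M (i+1)) ≤ 2 ^ p := Nat.pow_le_pow_right (by norm_num) hc
      exact absurd (lt_of_lt_of_le (hlt i) (le_trans h2 h1)) (lt_irrefl _)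
  have hppos : ∀ i, ∃ p, (y i).testBit p = true :=
    fun i => Nat.exists_testBit_of_ne_zero (Nat.pos_iff_ne_zero.1 (hypos i))
  choose pos hpos using hppos
  have hl' : ∀ i, ∃ l : List ℕ, decode₂ (List ℕ) (pos i) = some l ∧ l ≠ [] ∧ l ∈ T := by
    intro i
    obtain ⟨l, hdec, hne⟩ := (hyA i).1.2.1 (pos i) (hpos i)
    exact ⟨l, hdec, hne, (hyA i).2 (pos i) (hpos i) l hdec⟩
  choose l hdec hlne hlT using hl'
  have hpairbit : ∀ i j, i < j → ∀ p,
      (y i + y j).testBit p = ((y i).testBit p || (y j).testBit p) := by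
    intro i j hij p
    exact testBit_add_block (hlt i)
      (dvd_trans (pow_dvd_pow 2 (hMmono.monotone (Nat.succ_le_of_lt hij))) (hdvd j)) p
  have hcomp : ∀ i j, l i <+: l j ∨ l j <+: l i := by
    have key : ∀ i j, i < j → l i <+: l j ∨ l j <+: l i := by
      intro i j hij
      refine (hpA i j hij).1.2.2 (pos i) (pos j) ?_ ?_ _ _ (hdec i) (hdec j)
      · rw [hpairbit i j hij, hpos i]; simp
      · rw [hpairbit i j hij, hpos j]; simp
    intro i j
    rcases lt_trichotomy i j with hij | rfl | hij
    · exact key i j hij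
    · exact Or.inl (List.prefix_refl _)
    · exact (key j i hij).symm
  have hposbound : ∀ i, M i ≤ pos i ∧ pos i < M (i + 1) := fun i => hsupp i (pos i) (hpos i)
  have hposinj : Function.Injective pos := by
    intro i j hij
    by_contra hne'
    rcases Nat.lt_or_ge i j with hlt' | hge
    · have := (hposbound i).2
      have h2 := (hposbound j).1
      have h3 : M (i+1) ≤ M j := hMmono.monotone (Nat.succ_le_of_lt hlt')
      omega
    · have hlt' : j < i := lt_of_le_of_ne hge (Ne.symm hne')
      have := (hposbound j).2
      have h2 := (hposbound i).1
      have h3 : M (j+1) ≤ M i := hMmono.monotone (Nat.succ_le_of_lt hlt')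
      omega
  have hlinj : Function.Injective l := by
    intro i j hij
    apply hposinj
    rw [← decode₂_eq_some.1 (hdec i), ← decode₂_eq_some.1 (hdec j), hij]
  have hlen_inj : Function.Injective fun i => (l i).length := by
    intro i j hij
    apply hlinj
    rcases hcomp i j with h' | h'
    · exact h'.eq_of_length hij
    · exact (h'.eq_of_length hij.symm).symm
  have hunb : ∀ k, ∃ i, k ≤ (l i).length := by
    intro k
    by_contra hcon
    push_neg at hcon
    obtain ⟨a, b, hab, heq⟩ :=
      Finite.exists_ne_map_eq_of_infinite (fun i => (⟨(l i).length, hcon i⟩ : Fin k))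
    exact hab (hlen_inj (congrArg Fin.val heq))
  choose idx hidx using hunb
  have key : ∀ j n, n < (l j).length → (l (idx (n + 1))).getD n 0 = (l j).getD n 0 := by
    intro j n hn
    have hn' : n < (l (idx (n + 1))).length :=
      lt_of_lt_of_le (Nat.lt_succ_self n) (hidx (n + 1))
    rcases hcomp (idx (n + 1)) j with h' | h'
    · exact (prefix_getD h' hn' 0).symm
    · exact prefix_getD h' hn 0
  refine ⟨fun n => (l (idx (n + 1))).getD n 0, fun k => ⟨l (idx k), hlT _, hidx k, ?_⟩⟩
  intro n hn
  exact key (idx k) n hn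

lemma isIP_good {T : Set (List ℕ)} (x : ℕ → ℕ)
    (hT : ∀ k : ℕ, (List.range (k + 1)).map x ∈ T) :
    IsIP {n | Good T n} := by
  classical
  set L : ℕ → List ℕ := fun k => (List.range (k + 1)).map x with hL
  have hLlen : ∀ k, (L k).length = k + 1 := fun k => by simp [hL]
  have hLpre : ∀ k m, k ≤ m → L k <+: L m := by
    intro k m hkm
    apply List.IsPrefix.map
    have : (List.range (m + 1)).take (k + 1) = List.range (k + 1) := by
      rw [List.take_range, min_eq_left (by omega)]
    rw [← this]
    exact List.take_prefix _ _
  have hLinj : Function.Injective L := by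
    intro a b hab
    have := hLlen a ▸ hLlen b ▸ congrArg List.length hab
    omega
  set p : ℕ → ℕ := fun k => encode (L k) with hp
  have hpinj : Function.Injective p := fun a b hab => hLinj (encode_injective hab)
  have hdecp : ∀ k, decode₂ (List ℕ) (p k) = some (L k) := fun k => decode₂_eq_some.2 rfl
  set f : ℕ → ℕ := fun k => 2 ^ p k with hf
  have hfinj : Function.Injective f :=
    fun a b hab => hpinj (Nat.pow_right_injective (le_refl 2) hab)
  have good_of_K : ∀ K : Finset ℕ, K.Nonempty → Good T (∑ k ∈ K, f k) := by
    intro K hKne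
    have hsum : (∑ k ∈ K, f k) = ∑ e ∈ K.image p, 2 ^ e := by
      rw [Finset.sum_image (fun a _ b _ h => hpinj h)]
    have hbit : ∀ q, (∑ k ∈ K, f k).testBit q = decide (q ∈ K.image p) := by
      intro q; rw [hsum, testBit_sum_two_pow]
    have hmem : ∀ q, (∑ k ∈ K, f k).testBit q = true → ∃ k ∈ K, p k = q := by
      intro q hq
      rw [hbit, decide_eq_true_eq, Finset.mem_image] at hq
      exact hq
    refine ⟨⟨?_, ?_, ?_⟩, ?_⟩
    · exact Finset.sum_pos (fun k _ => Nat.two_pow_pos (p k)) hKne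
    · intro q hq
      obtain ⟨k, _, rfl⟩ := hmem q hq
      exact ⟨L k, hdecp k, List.ne_nil_of_length_pos (by rw [hLlen]; omega)⟩
    · intro q q' hq hq' l m hdl hdm
      obtain ⟨k, _, rfl⟩ := hmem q hq
      obtain ⟨k', _, rfl⟩ := hmem q' hq'
      rw [hdecp k] at hdl
      rw [hdecp k'] at hdm
      obtain rfl : L k = l := by injection hdl
      obtain rfl : L k' = m := by injection hdm
      rcases le_total k k' with h | h
      · exact Or.inl (hLpre k k' h)
      · exact Or.inr (hLpre k' k h)
    · intro q hq l hdl
      obtain ⟨k, _, rfl⟩ := hmem q hq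
      rw [hdecp k] at hdl
      obtain rfl : L k = l := by injection hdl
      exact hT k
  refine ⟨Set.range f, Set.infinite_range_of_injective hfinj, ?_, ?_⟩
  · rintro _ ⟨k, rfl⟩
    have := good_of_K {k} ⟨k, Finset.mem_singleton_self k⟩
    simpa using this
  · rintro n ⟨G, hGsub, hGne, rfl⟩
    have hG : ∀ m ∈ G, ∃ k, f k = m := fun m hm => hGsub hm
    choose w hw using hG
    set K : Finset ℕ := G.attach.image (fun m => w m.1 m.2) with hK
    have hKim : K.image f = G := by
      ext m
      simp only [hK, Finset.image_image, Finset.mem_image, Finset.mem_attach, true_and,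
        Subtype.exists]
      constructor
      · rintro ⟨a, ha, rfl⟩
        simpa [Function.comp, hw a ha] using ha
      · intro hm
        exact ⟨m, hm, by simp [Function.comp, hw m hm]⟩
    have hKne : K.Nonempty := by
      apply Finset.Nonempty.of_image (f := f)
      rw [hKim]; exact hGne
    have : (∑ i ∈ G, i) = ∑ k ∈ K, f k := by
      rw [← hKim, Finset.sum_image (fun a _ b _ h => hfinj h)]
    rw [this]
    exact good_of_K K hKne

lemma reduction {Y : Type} [TopologicalSpace Y] [PolishSpace Y] [MeasurableSpace Y]
    [BorelSpace Y] (g : (ℕ → ℕ) → Y) (hg : Continuous g) :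
    ∃ f : Y → (ℕ → Bool), Measurable f ∧ f ⁻¹' hindmanIdeal = (Set.range g)ᶜ := by
  classical
  letI := TopologicalSpace.upgradeIsCompletelyMetrizable Y
  set cyl : List ℕ → Set (ℕ → ℕ) := fun l => {v | ∀ n < l.length, v n = l.getD n 0} with hcyl
  set Ty : Y → Set (List ℕ) :=
    fun y => {l | infDist y (g '' cyl l) ≤ (1 / 2 : ℝ) ^ l.length} with hTy
  set f : Y → ℕ → Bool := fun y n => if Good (Ty y) n then true else false with hfdef
  have hfy : ∀ y, {n | f y n = true} = {n | Good (Ty y) n} := by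
    intro y; ext n; by_cases h : Good (Ty y) n <;> simp [hfdef, h]
  -- the key equivalence
  have hiff : ∀ y : Y, IsIP {n | Good (Ty y) n} ↔ y ∈ Set.range g := by
    intro y
    constructor
    · intro h
      obtain ⟨x, hx⟩ := branch_of_isIP h
      choose l hmem hlen hag using hx
      have hcylne : ∀ k, (g '' cyl (l k)).Nonempty :=
        fun k => ⟨g (fun n => (l k).getD n 0), mem_image_of_mem g (fun n _ => rfl)⟩
      have hvk : ∀ k, ∃ v ∈ cyl (l k), dist y (g v) < 2 * (1 / 2 : ℝ) ^ k := by
        intro k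
        have h1 : infDist y (g '' cyl (l k)) < 2 * (1 / 2 : ℝ) ^ k := by
          have h2 : ((1:ℝ) / 2) ^ (l k).length ≤ (1 / 2 : ℝ) ^ k :=
            pow_le_pow_of_le_one (by norm_num) (by norm_num) (hlen k)
          have h3 : (0:ℝ) < (1 / 2 : ℝ) ^ k := by positivity
          calc infDist y (g '' cyl (l k)) ≤ (1 / 2 : ℝ) ^ (l k).length := hmem k
            _ ≤ (1 / 2 : ℝ) ^ k := h2
            _ < 2 * (1 / 2 : ℝ) ^ k := by linarith
        obtain ⟨z, hz, hzd⟩ := (infDist_lt_iff (hcylne k)).1 h1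
        obtain ⟨v, hv, rfl⟩ := hz
        exact ⟨v, hv, hzd⟩
      choose v hvc hvd using hvk
      have hvx : Filter.Tendsto v Filter.atTop (nhds x) := by
        rw [tendsto_pi_nhds]
        intro n
        apply Filter.Tendsto.congr' _ tendsto_const_nhds
        filter_upwards [Filter.eventually_ge_atTop (n + 1)] with k hk
        have hn : n < (l k).length := lt_of_lt_of_le hk (hlen k)
        rw [hag k n hn]
        exact (hvc k n hn).symm
      have hgx : Filter.Tendsto (fun k => g (v k)) Filter.atTop (nhds (g x)) :=
        (hg.tendsto x).comp hvx
      have hgy : Filter.Tendsto (fun k => g (v k)) Filter.atTop (nhds y) := by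
        rw [tendsto_iff_dist_tendsto_zero]
        have hb : ∀ k : ℕ, dist (g (v k)) y ≤ 2 * (1 / 2 : ℝ) ^ k := fun k => by
          rw [dist_comm]; exact (hvd k).le
        have ht : Filter.Tendsto (fun k : ℕ => 2 * (1 / 2 : ℝ) ^ k) Filter.atTop (nhds 0) := by
          have := (tendsto_pow_atTop_nhds_zero_of_lt_one
            (by norm_num : (0:ℝ) ≤ 1 / 2) (by norm_num)).const_mul (2:ℝ)
          simpa using this
        exact squeeze_zero (fun k => dist_nonneg) hb ht
      exact ⟨x, tendsto_nhds_unique hgx hgy⟩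
    · rintro ⟨x, rfl⟩
      apply isIP_good x
      intro k
      have hxc : x ∈ cyl ((List.range (k + 1)).map x) := by
        intro n hn
        simp only [List.length_map, List.length_range] at hn
        rw [List.getD_eq_getElem _ _ (by simpa using hn)]
        simp
      have : infDist (g x) (g '' cyl ((List.range (k + 1)).map x)) ≤ 0 := by
        have := infDist_le_dist_of_mem (mem_image_of_mem g hxc) (x := g x)
        simpa using this
      refine le_trans this (by positivity)
  -- measurability
  have hmeas : Measurable f := by
    apply measurable_pi_lambda
    intro n
    have hS : MeasurableSet {y : Y | Good (Ty y) n} := by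
      have : {y : Y | Good (Ty y) n} = {y : Y | Good0 n} ∩
          ⋂ (p : ℕ), ⋂ (l : List ℕ), ⋂ (_ : n.testBit p = true),
            ⋂ (_ : decode₂ (List ℕ) p = some l), {y : Y | l ∈ Ty y} := by
        ext y
        simp only [Set.mem_inter_iff, Set.mem_iInter, Set.mem_setOf_eq, Good]
        tauto
      rw [this]
      refine MeasurableSet.inter (MeasurableSet.const _) ?_
      refine MeasurableSet.iInter fun p => MeasurableSet.iInter fun l =>
        MeasurableSet.iInter fun _ => MeasurableSet.iInter fun _ => ?_
      have : {y : Y | l ∈ Ty y} = {y : Y | infDist y (g '' cyl l) ≤ (1 / 2 : ℝ) ^ l.length} :=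
        rfl
      rw [this]
      exact (isClosed_le (continuous_infDist_pt _) continuous_const).measurableSet
    exact Measurable.ite hS measurable_const measurable_const
  refine ⟨f, hmeas, ?_⟩
  ext y
  simp only [Set.mem_preimage, hindmanIdeal, Set.mem_setOf_eq, hfy, Set.mem_compl_iff]
  rw [hiff]

lemma infinite_iff_nat {s : Set ℕ} : s.Infinite ↔ ∀ N, ∃ n, N ≤ n ∧ n ∈ s := by
  constructor
  · intro h N
    obtain ⟨n, hns, hn⟩ := h.exists_gt N
    exact ⟨n, hn.le, hns⟩
  · intro h hfin
    obtain ⟨N, hN⟩ := hfin.bddAbove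
    obtain ⟨n, hn1, hn2⟩ := h (N + 1)
    have := hN hn2
    omega

lemma analytic_compl : AnalyticSet hindmanIdealᶜ := by
  classical
  have m1 : ∀ n, Measurable (fun p : (ℕ → Bool) × (ℕ → Bool) => p.1 n) :=
    fun n => (measurable_pi_apply n).comp measurable_fst
  have m2 : ∀ n, Measurable (fun p : (ℕ → Bool) × (ℕ → Bool) => p.2 n) :=
    fun n => (measurable_pi_apply n).comp measurable_snd
  have mc1 : ∀ n, MeasurableSet {p : (ℕ → Bool) × (ℕ → Bool) | p.1 n = true} :=
    fun n => m1 n (measurableSet_singleton true)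
  have mc2 : ∀ n, MeasurableSet {p : (ℕ → Bool) × (ℕ → Bool) | p.2 n = true} :=
    fun n => m2 n (measurableSet_singleton true)
  set S : Set ((ℕ → Bool) × (ℕ → Bool)) :=
    {p | (∀ N, ∃ n, N ≤ n ∧ p.2 n = true) ∧ (∀ n, p.2 n = true → p.1 n = true) ∧
      ∀ F : Finset ℕ, (∀ i ∈ F, p.2 i = true) → F.Nonempty → p.1 (∑ i ∈ F, i) = true}
    with hSdef
  have hmeas : MeasurableSet S := by
    have hrw : S =
        (⋂ N : ℕ, ⋃ n : ℕ, ⋃ (_ : N ≤ n), {p : (ℕ → Bool) × (ℕ → Bool) | p.2 n = true}) ∩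
        ((⋂ n : ℕ, {p : (ℕ → Bool) × (ℕ → Bool) | p.2 n = true}ᶜ ∪
            {p : (ℕ → Bool) × (ℕ → Bool) | p.1 n = true}) ∩
          (⋂ F : Finset ℕ,
            (⋂ i ∈ F, {p : (ℕ → Bool) × (ℕ → Bool) | p.2 i = true})ᶜ ∪
            ({p : (ℕ → Bool) × (ℕ → Bool) | ¬ F.Nonempty} ∪
              {p : (ℕ → Bool) × (ℕ → Bool) | p.1 (∑ i ∈ F, i) = true}))) := by
      ext p
      simp only [hSdef, Set.mem_setOf_eq, Set.mem_inter_iff, Set.mem_iInter, Set.mem_iUnion,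
        Set.mem_union, Set.mem_compl_iff, exists_prop]
      refine and_congr (by rfl) (and_congr ?_ ?_)
      · exact forall_congr' fun n => by tauto
      · exact forall_congr' fun F => by tauto
    rw [hrw]
    refine MeasurableSet.inter ?_ (MeasurableSet.inter ?_ ?_)
    · exact MeasurableSet.iInter fun N => MeasurableSet.iUnion fun n =>
        MeasurableSet.iUnion fun _ => mc2 n
    · exact MeasurableSet.iInter fun n => ((mc2 n).compl.union (mc1 n))
    · refine MeasurableSet.iInter fun F => MeasurableSet.union ?_
        (MeasurableSet.union (MeasurableSet.const _) (mc1 _))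
      exact (MeasurableSet.biInter F.countable_toSet fun i _ => mc2 i).compl
  have him : hindmanIdealᶜ = Prod.fst '' S := by
    ext x
    simp only [Set.mem_compl_iff, hindmanIdeal, Set.mem_setOf_eq, not_not, Set.mem_image]
    constructor
    · rintro ⟨Bs, hinf, hsub, hfs⟩
      refine ⟨(x, fun n => decide (n ∈ Bs)), ?_, rfl⟩
      simp only [hSdef, Set.mem_setOf_eq, decide_eq_true_eq]
      refine ⟨fun N => ?_, fun n hn => hsub hn, fun F hF hFne => ?_⟩
      · obtain ⟨n, hn1, hn2⟩ := infinite_iff_nat.1 hinf N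
        exact ⟨n, hn1, hn2⟩
      · exact hfs ⟨F, fun i hi => hF i hi, hFne, rfl⟩
    · rintro ⟨p, hp, rfl⟩
      simp only [hSdef, Set.mem_setOf_eq] at hp
      refine ⟨{n | p.2 n = true}, ?_, fun n hn => hp.2.1 n hn, ?_⟩
      · exact infinite_iff_nat.2 fun N => hp.1 N
      · rintro m ⟨F, hFsub, hFne, rfl⟩
        exact hp.2.2 F (fun i hi => hFsub hi) hFne
  rw [him]
  haveI : PolishSpace ((ℕ → Bool) × (ℕ → Bool)) := {}
  exact hmeas.analyticSet.image_of_continuous continuous_fst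

end HindmanProof

/-- The Hindman ideal is `Π¹₁`-complete: its complement is analytic, and every
coanalytic subset of every Polish space Borel-reduces to it. -/
theorem hindmanIdeal_coanalytic_complete :
    AnalyticSet hindmanIdealᶜ ∧
      ∀ (Y : Type) [TopologicalSpace Y] [PolishSpace Y]
        [MeasurableSpace Y] [BorelSpace Y] (B : Set Y),
        AnalyticSet Bᶜ →
          ∃ f : Y → (ℕ → Bool), Measurable f ∧ f ⁻¹' hindmanIdeal = B := by
  refine ⟨HindmanProof.analytic_compl, ?_⟩
  intro Y _ _ _ _ B hB
  rw [AnalyticSet_def] at hB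
  rcases hB with hB | ⟨g, hgc, hgr⟩
  · have hBuniv : B = Set.univ := by
      rw [← Set.compl_empty, ← hB, compl_compl]
    refine ⟨fun _ _ => false, measurable_const, ?_⟩
    have hmem : (fun _ : ℕ => false) ∈ hindmanIdeal := by
      rintro ⟨C, hCinf, hCsub, -⟩
      have : C = ∅ := Set.subset_empty_iff.1 (by simpa using hCsub)
      exact hCinf (this ▸ Set.finite_empty)
    rw [hBuniv]
    exact Set.preimage_const_of_mem hmem
  · obtain ⟨f, hfm, hfp⟩ := HindmanProof.reduction g hgc
    exact ⟨f, hfm, by rw [hfp, hgr, compl_compl]⟩
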